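/- For a maximally non-commutative factor system ω of a finite abelian group G, any irreducible projective unitary representation of G with factor system ω has dimension equal to the square root of |G|. -/

import Mathlib

open Matrix

/-- For a maximally non-commutative factor system `ω` of a finite abelian group `G`,
any irreducible projective unitary representation of `G` with factor system `ω` has
dimension equal to `√|G|`, i.e. its dimension `n` satisfies `n * n = |G|`. -/
theorem dim_irreducible_of_maximally_non_commutative
    {G : Type*} [CommGroup G] [Fintype G] {n : ℕ} (hn : 0 < n)
    (ω : G → G → ℂ)
    (hcocycle : ∀ g h k, ω g h * ω (g * h) k = ω h k * ω g (h * k))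
    (hω : ∀ g h, ‖ω g h‖ = 1)
    (hmnc : ∀ g, (∀ h, ω g h = ω h g) → g = 1)
    (V : G → Matrix (Fin n) (Fin n) ℂ)
    (hVunit : ∀ g, V g ∈ Matrix.unitaryGroup (Fin n) ℂ)
    (hVproj : ∀ g h, V g * V h = ω g h • V (g * h))
    (hirr : ∀ p : Submodule ℂ (Fin n → ℂ),
      (∀ g, p.map (Matrix.toLin' (V g)) ≤ p) → p = ⊥ ∨ p = ⊤) :
    n * n = Fintype.card G := by
  classical
  -- basic facts about ω
  have hω0 : ∀ g h, ω g h ≠ 0 := by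
    intro g h h0
    have := hω g h
    rw [h0] at this
    simp at this
  have hωc : ∀ g h, ω g h * star (ω g h) = 1 := by
    intro g h
    rw [Complex.star_def, Complex.mul_conj, ← Complex.sq_norm, hω]
    norm_num
  -- unitarity
  have hU1 : ∀ g, star (V g) * V g = 1 := fun g => ((Unitary.mem_iff).mp (hVunit g)).1
  have hU2 : ∀ g, V g * star (V g) = 1 := fun g => ((Unitary.mem_iff).mp (hVunit g)).2
  have i0 : Fin n := ⟨0, hn⟩
  have hVne : ∀ g, V g ≠ 0 := by
    intro g h0
    have h1 : star (V g) * V g = 1 := hU1 g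
    rw [h0, mul_zero] at h1
    have := congrFun (congrFun h1 i0) i0
    simp [Matrix.one_apply] at this
  have smul_cancel : ∀ (a b : ℂ) (M : Matrix (Fin n) (Fin n) ℂ), M ≠ 0 →
      a • M = b • M → a = b := by
    intro a b M hM h
    have h2 : (a - b) • M = 0 := by rw [sub_smul, h, sub_self]
    rcases smul_eq_zero.mp h2 with h' | h'
    · exact sub_eq_zero.mp h'
    · exact absurd h' hM
  -- the commutator phase
  set c : G → G → ℂ := fun g h => ω g h / ω h g with hc
  have cne0 : ∀ g h, c g h ≠ 0 := fun g h => div_ne_zero (hω0 g h) (hω0 h g)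
  have cswap : ∀ g h, c g h * c h g = 1 := by
    intro g h
    simp only [hc]
    rw [div_mul_div_comm, mul_comm (ω g h) (ω h g)]
    exact div_self (mul_ne_zero (hω0 h g) (hω0 g h))
  have cinv : ∀ g h, c g h = (c h g)⁻¹ := by
    intro g h
    simp only [hc]
    rw [inv_div]
  -- commutation relation
  have comm : ∀ g h, V g * V h = c g h • (V h * V g) := by
    intro g h
    rw [hVproj g h, hVproj h g, mul_comm h g, smul_smul, hc]
    congr 1
    exact (div_mul_cancel₀ _ (hω0 h g)).symm
  -- conjugation relation
  have conj : ∀ h g, V h * V g * star (V h) = c h g • V g := by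
    intro h g
    calc V h * V g * star (V h) = (c h g • (V g * V h)) * star (V h) := by rw [← comm h g]
    _ = c h g • (V g * (V h * star (V h))) := by rw [smul_mul_assoc, mul_assoc]
    _ = c h g • V g := by rw [hU2, mul_one]
  -- multiplicativity of c in the first argument
  have cmul1 : ∀ g h k, c (g * h) k = c g k * c h k := by
    intro g h k
    apply smul_cancel _ _ (V k) (hVne k)
    have e1 : V g * (V h * V k * star (V h)) * star (V g) = (c g k * c h k) • V k := by
      rw [conj h k, mul_smul_comm, smul_mul_assoc, conj g k, smul_smul, mul_comm (c h k)]
    have e2 : V g * (V h * V k * star (V h)) * star (V g)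
        = V (g * h) * V k * star (V (g * h)) := by
      have hstar : star (V h) * star (V g) = star (ω g h) • star (V (g * h)) := by
        rw [← Matrix.star_mul, hVproj g h, star_smul]
      calc V g * (V h * V k * star (V h)) * star (V g)
          = (V g * V h) * V k * (star (V h) * star (V g)) := by
            simp only [mul_assoc]
      _ = (ω g h • V (g * h)) * V k * (star (ω g h) • star (V (g * h))) := by
            rw [hVproj g h, hstar]
      _ = (ω g h * star (ω g h)) • (V (g * h) * V k * star (V (g * h))) := by
            rw [smul_mul_assoc, smul_mul_assoc, mul_smul_comm, smul_smul]
      _ = V (g * h) * V k * star (V (g * h)) := by rw [hωc, one_smul]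
    rw [← conj (g * h) k, ← e2, e1]
  have cone1 : ∀ g, c g 1 = 1 := by
    intro g
    have h1 : ω g 1 = ω 1 1 := by
      have h := hcocycle g 1 1
      simp only [mul_one] at h
      exact mul_right_cancel₀ (hω0 g 1) h
    have h2 : ω 1 g = ω 1 1 := by
      have h := hcocycle 1 1 g
      simp only [one_mul, mul_one] at h
      exact (mul_right_cancel₀ (hω0 1 g) h).symm
    rw [hc]
    simp only
    rw [h1, h2]
    exact div_self (hω0 1 1)
  have cone1' : ∀ g, c 1 g = 1 := by
    intro g
    rw [cinv, cone1, inv_one]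
  have cmul2 : ∀ g h k, c g (h * k) = c g h * c g k := by
    intro g h k
    rw [cinv g (h * k), cmul1 h k g, mul_inv, ← cinv, ← cinv]
  have cinvr : ∀ g k, c g k⁻¹ = c k g := by
    intro g k
    have hptr : c g k⁻¹ * c g k = 1 := by rw [← cmul2, inv_mul_cancel, cone1]
    rw [cinv k g]
    exact eq_inv_of_mul_eq_one_left hptr
  -- traces
  have trace0 : ∀ g, g ≠ 1 → trace (V g) = 0 := by
    intro g hg
    obtain ⟨h, hh⟩ : ∃ h, ω g h ≠ ω h g := by
      by_contra hcon
      push_neg at hcon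
      exact hg (hmnc g hcon)
    have hch : c g h ≠ 1 := by
      simp only [hc]
      intro e
      exact hh (by rwa [div_eq_iff (hω0 h g), one_mul] at e)
    have hchg : c h g ≠ 1 := by
      rw [cinv]
      intro hcon
      exact hch (by rw [← inv_inv (c g h), hcon, inv_one])
    have e1 : trace (V h * V g * star (V h)) = trace (V g) := by
      rw [Matrix.trace_mul_comm (V h * V g) (star (V h)), ← mul_assoc, hU1, one_mul]
    have e2 : trace (V h * V g * star (V h)) = c h g * trace (V g) := by
      rw [conj h g, Matrix.trace_smul, smul_eq_mul]
    have : (c h g - 1) * trace (V g) = 0 := by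
      rw [sub_mul, one_mul, ← e2, e1, sub_self]
    rcases mul_eq_zero.mp this with h' | h'
    · exact absurd (sub_eq_zero.mp h') hchg
    · exact h'
  have traceorth : ∀ g h : G, g ≠ h → trace (star (V g) * V h) = 0 := by
    intro g h hgh
    have e1 : V h = (ω g (g⁻¹ * h))⁻¹ • (V g * V (g⁻¹ * h)) := by
      rw [hVproj, mul_inv_cancel_left, smul_smul, inv_mul_cancel₀ (hω0 g (g⁻¹ * h)), one_smul]
    have hne : g⁻¹ * h ≠ 1 := fun hcon => hgh (inv_mul_eq_one.mp hcon)
    rw [e1, mul_smul_comm, ← mul_assoc, hU1, one_mul, Matrix.trace_smul, smul_eq_mul,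
      trace0 _ hne, mul_zero]
  have tracediag : ∀ g : G, trace (star (V g) * V g) = (n : ℂ) := by
    intro g
    rw [hU1]
    simp [Matrix.trace_one]
  have ncne : (n : ℂ) ≠ 0 := Nat.cast_ne_zero.mpr hn.ne'
  -- linear independence
  have li : LinearIndependent ℂ V := by
    rw [Fintype.linearIndependent_iff]
    intro f hf g₀
    have : trace (star (V g₀) * (∑ i, f i • V i)) = f g₀ * n := by
      rw [Finset.mul_sum]
      rw [Matrix.trace_sum]
      rw [Finset.sum_eq_single g₀]
      · rw [mul_smul_comm, Matrix.trace_smul, tracediag, smul_eq_mul]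
      · intro b _ hb
        rw [mul_smul_comm, Matrix.trace_smul, traceorth g₀ b (Ne.symm hb), smul_zero]
      · intro hcon
        exact absurd (Finset.mem_univ g₀) hcon
    rw [hf, mul_zero, Matrix.trace_zero] at this
    exact (mul_eq_zero.mp this.symm).resolve_right ncne
  -- Schur's lemma
  haveI : Nonempty (Fin n) := ⟨i0⟩
  haveI : Nontrivial (Fin n → ℂ) := inferInstance
  have schur : ∀ B : Matrix (Fin n) (Fin n) ℂ, (∀ g, V g * B = B * V g) →
      ∃ μ : ℂ, B = μ • (1 : Matrix (Fin n) (Fin n) ℂ) := by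
    intro B hB
    obtain ⟨μ, hμ⟩ := Module.End.exists_eigenvalue
      (Matrix.toLin' B : Module.End ℂ (Fin n → ℂ))
    refine ⟨μ, ?_⟩
    have hinv : ∀ g, (Module.End.eigenspace (Matrix.toLin' B) μ).map (Matrix.toLin' (V g)) ≤
        Module.End.eigenspace (Matrix.toLin' B) μ := by
      intro g x hx
      obtain ⟨v, hv, rfl⟩ := hx
      simp only [SetLike.mem_coe] at hv
      rw [Module.End.mem_eigenspace_iff] at hv ⊢
      have : Matrix.toLin' B (Matrix.toLin' (V g) v) = Matrix.toLin' (V g) (Matrix.toLin' B v) := by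
        rw [← LinearMap.comp_apply, ← Matrix.toLin'_mul, ← hB g, Matrix.toLin'_mul,
          LinearMap.comp_apply]
      rw [this, hv, _root_.map_smul]
    rcases hirr _ hinv with hbot | htop
    · exact absurd hbot hμ
    · apply Matrix.toLin'.injective
      apply LinearMap.ext
      intro v
      have hv : v ∈ Module.End.eigenspace (Matrix.toLin' B) μ := htop ▸ Submodule.mem_top
      rw [Module.End.mem_eigenspace_iff] at hv
      rw [hv, _root_.map_smul, Matrix.toLin'_one]
      rfl
  -- character sums
  have charsum : ∀ h, h ≠ 1 → ∑ g : G, c g h = 0 := by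
    intro h hh
    obtain ⟨g₀, hg₀⟩ : ∃ g₀, ω h g₀ ≠ ω g₀ h := by
      by_contra hcon
      push_neg at hcon
      exact hh (hmnc h hcon)
    have hcg₀ : c g₀ h ≠ 1 := by
      simp only [hc]
      intro e
      exact hg₀ (by rw [div_eq_iff (hω0 h g₀), one_mul] at e; exact e.symm)
    have e1 : ∑ g : G, c (g₀ * g) h = ∑ g : G, c g h :=
      Equiv.sum_comp (Equiv.mulLeft g₀) (fun g => c g h)
    have e2 : ∑ g : G, c (g₀ * g) h = c g₀ h * ∑ g : G, c g h := by
      rw [Finset.mul_sum]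
      exact Finset.sum_congr rfl fun g _ => by rw [cmul1]
    have : (c g₀ h - 1) * ∑ g : G, c g h = 0 := by
      rw [sub_mul, one_mul, ← e2, e1, sub_self]
    exact (mul_eq_zero.mp this).resolve_left (fun h' => hcg₀ (sub_eq_zero.mp h'))
  set N : ℂ := (Fintype.card G : ℂ) with hN
  have hNne : N ≠ 0 := Nat.cast_ne_zero.mpr Fintype.card_ne_zero
  -- conjugation of conjugation
  have conjconj : ∀ (k h : G) (A : Matrix (Fin n) (Fin n) ℂ),
      V k * (V h * A * star (V h)) * star (V k) = V (k * h) * A * star (V (k * h)) := by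
    intro k h A
    have hstar : star (V h) * star (V k) = star (ω k h) • star (V (k * h)) := by
      rw [← Matrix.star_mul, hVproj k h, star_smul]
    calc V k * (V h * A * star (V h)) * star (V k)
        = (V k * V h) * A * (star (V h) * star (V k)) := by simp only [mul_assoc]
    _ = (ω k h • V (k * h)) * A * (star (ω k h) • star (V (k * h))) := by
        rw [hVproj k h, hstar]
    _ = (ω k h * star (ω k h)) • (V (k * h) * A * star (V (k * h))) := by
        rw [smul_mul_assoc, smul_mul_assoc, mul_smul_comm, smul_smul]
    _ = V (k * h) * A * star (V (k * h)) := by rw [hωc, one_smul]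
  -- V1 conjugation is identity
  have conj1 : ∀ A : Matrix (Fin n) (Fin n) ℂ, V 1 * A * star (V 1) = A := by
    intro A
    have hV1 : V 1 = ω 1 1 • 1 := by
      have := hVproj 1 1
      rw [one_mul] at this
      have e : star (V 1) * (V 1 * V 1) = star (V 1) * (ω 1 1 • V 1) := by rw [this]
      rw [← mul_assoc, hU1, one_mul, mul_smul_comm, hU1] at e
      exact e
    calc V 1 * A * star (V 1)
        = (ω 1 1 • (1 : Matrix (Fin n) (Fin n) ℂ)) * A *
            (star (ω 1 1) • star (1 : Matrix (Fin n) (Fin n) ℂ)) := by rw [hV1, star_smul]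
    _ = (ω 1 1 * star (ω 1 1)) • ((1 : Matrix (Fin n) (Fin n) ℂ) * A *
            star (1 : Matrix (Fin n) (Fin n) ℂ)) := by
          rw [smul_mul_assoc, smul_mul_assoc, mul_smul_comm, smul_smul]
    _ = A := by rw [hωc, one_smul, star_one, one_mul, mul_one]
  -- commutation with star
  have starcomm : ∀ k g, V k * star (V g) = c g k • (star (V g) * V k) := by
    intro k g
    have e : star (V g) * (V g * V k) * star (V g) = V k * star (V g) := by
      rw [← mul_assoc, hU1, one_mul]
    rw [← e, comm g k, mul_smul_comm, smul_mul_assoc, mul_assoc, mul_assoc, hU2, mul_one]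
  -- spanning
  have hspan : ∀ A : Matrix (Fin n) (Fin n) ℂ, A ∈ Submodule.span ℂ (Set.range V) := by
    intro A
    set Ag : G → Matrix (Fin n) (Fin n) ℂ :=
      fun g => ∑ h : G, c g h • (V h * A * star (V h)) with hAg
    -- conjugation acts on Ag by the character
    have conjAg : ∀ g k, V k * Ag g * star (V k) = c k g • Ag g := by
      intro g k
      have e1 : V k * Ag g * star (V k) = ∑ h : G, c g h • (V (k * h) * A * star (V (k * h))) := by
        rw [hAg]
        simp only
        rw [Finset.mul_sum, Finset.sum_mul]
        exact Finset.sum_congr rfl fun h _ => by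
          rw [mul_smul_comm, smul_mul_assoc, conjconj]
      have e2 : ∑ h : G, c g h • (V (k * h) * A * star (V (k * h)))
          = ∑ h : G, c g (k⁻¹ * h) • (V h * A * star (V h)) := by
        have := Equiv.sum_comp (Equiv.mulLeft k)
          (fun h => c g (k⁻¹ * h) • (V h * A * star (V h)))
        rw [← this]
        exact Finset.sum_congr rfl fun h _ => by
          simp only [Equiv.coe_mulLeft, inv_mul_cancel_left]
      have e3 : ∑ h : G, c g (k⁻¹ * h) • (V h * A * star (V h)) = c k g • Ag g := by
        rw [hAg]
        simp only
        rw [Finset.smul_sum]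
        exact Finset.sum_congr rfl fun h _ => by
          rw [cmul2, cinvr, smul_smul]
      rw [e1, e2, e3]
    -- each Ag is a multiple of V g
    have hAgVg : ∀ g, ∃ μ : ℂ, Ag g = μ • V g := by
      intro g
      have hcomm : ∀ k, V k * (Ag g * star (V g)) = (Ag g * star (V g)) * V k := by
        intro k
        have e1 : V k * Ag g = c k g • (Ag g * V k) := by
          have := conjAg g k
          have e : V k * Ag g * (star (V k) * V k) = (c k g • Ag g) * V k := by
            rw [← mul_assoc, this]
          rw [hU1, mul_one, smul_mul_assoc] at e
          exact e
        calc V k * (Ag g * star (V g)) = (V k * Ag g) * star (V g) := by rw [mul_assoc]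
        _ = c k g • (Ag g * V k * star (V g)) := by rw [e1, smul_mul_assoc]
        _ = c k g • (Ag g * (V k * star (V g))) := by rw [mul_assoc]
        _ = c k g • (Ag g * (c g k • (star (V g) * V k))) := by rw [starcomm k g]
        _ = (c k g * c g k) • (Ag g * (star (V g) * V k)) := by
            rw [mul_smul_comm, smul_smul]
        _ = Ag g * star (V g) * V k := by
            rw [mul_comm (c k g), cswap, one_smul, mul_assoc]
      obtain ⟨μ, hμ⟩ := schur (Ag g * star (V g)) hcomm
      refine ⟨μ, ?_⟩
      have : Ag g * (star (V g) * V g) = (μ • 1) * V g := by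
        rw [← mul_assoc, hμ]
      rw [hU1, mul_one, smul_mul_assoc, one_mul] at this
      exact this
    -- sum of Ag equals N • A
    have hsum : ∑ g : G, Ag g = N • A := by
      rw [hAg]
      simp only
      rw [Finset.sum_comm]
      have e : ∀ h : G, ∑ g : G, c g h • (V h * A * star (V h))
          = (∑ g : G, c g h) • (V h * A * star (V h)) := fun h => (Finset.sum_smul).symm
      calc ∑ h : G, ∑ g : G, c g h • (V h * A * star (V h))
          = ∑ h : G, (∑ g : G, c g h) • (V h * A * star (V h)) :=
            Finset.sum_congr rfl fun h _ => e h
      _ = N • A := by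
          rw [Finset.sum_eq_single 1]
          · rw [conj1]
            congr 1
            rw [hN]
            simp [cone1]
          · intro h _ hh
            rw [charsum h hh, zero_smul]
          · intro hcon
            exact absurd (Finset.mem_univ 1) hcon
    -- conclude
    have hmem : ∑ g : G, Ag g ∈ Submodule.span ℂ (Set.range V) := by
      apply Submodule.sum_mem
      intro g _
      obtain ⟨μ, hμ⟩ := hAgVg g
      rw [hμ]
      exact Submodule.smul_mem _ μ (Submodule.subset_span ⟨g, rfl⟩)
    have : A = N⁻¹ • ∑ g : G, Ag g := by
      rw [hsum, smul_smul, inv_mul_cancel₀ hNne, one_smul]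
    rw [this]
    exact Submodule.smul_mem _ _ hmem
  -- build the basis and count
  have b : Module.Basis G ℂ (Matrix (Fin n) (Fin n) ℂ) :=
    Module.Basis.mk li (fun x _ => hspan x)
  have h1 : Module.finrank ℂ (Matrix (Fin n) (Fin n) ℂ) = Fintype.card G :=
    Module.finrank_eq_card_basis b
  have h2 : Module.finrank ℂ (Matrix (Fin n) (Fin n) ℂ) = n * n := by
    rw [Module.finrank_matrix]
    simp
  rw [← h1, h2]
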